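/- For all integers n ≥ 2k+1 ≥ 1, Σ_{i=0}^{k} (-1)^i C(n-k-1-i, k-i) C(n,i) (n-2i)^{2k+1} = 2^{2k} · n! / (n-2k-1)!. -/

import Mathlib

open Finset

/-- Integer-argument binomial coefficient: `ch a b = C(a, b)` for `0 ≤ b`, `0` otherwise. -/
def ch (a : ℕ) (b : ℤ) : ℤ := if 0 ≤ b then (a.choose b.toNat : ℤ) else 0

lemma ch_ofNat (a s : ℕ) : ch a (s : ℤ) = (a.choose s : ℤ) := by
  simp [ch]

lemma ch_neg {a : ℕ} {b : ℤ} (hb : b < 0) : ch a b = 0 := by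
  simp [ch, not_le.mpr hb]

lemma ch_pascal (a : ℕ) (b : ℤ) : ch (a + 1) b = ch a b + ch a (b - 1) := by
  rcases lt_trichotomy b 0 with hb | hb | hb
  · rw [ch_neg hb, ch_neg hb, ch_neg (by omega), add_zero]
  · subst hb
    simp [ch, show ¬ (0:ℤ) ≤ -1 by norm_num]
  · obtain ⟨s, rfl⟩ : ∃ s : ℕ, b = (s : ℤ) + 1 := ⟨(b - 1).toNat, by omega⟩
    have h1 : ((s : ℤ) + 1).toNat = s + 1 := by omega
    have h2 : ((s : ℤ) + 1 - 1).toNat = s := by omega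
    simp only [ch, if_pos (by omega : (0:ℤ) ≤ (s:ℤ) + 1),
      if_pos (by omega : (0:ℤ) ≤ (s:ℤ) + 1 - 1), h1, h2]
    rw [Nat.choose_succ_succ]
    push_cast
    ring

lemma ch_L1 (a : ℕ) (b : ℤ) :
    ((a : ℤ) + 1 - b) * ch (a + 1) b = ((a : ℤ) + 1) * ch a b := by
  rcases lt_or_ge b 0 with hb | hb
  · rw [ch_neg hb, ch_neg hb, mul_zero, mul_zero]
  · obtain ⟨t, rfl⟩ : ∃ t : ℕ, b = (t : ℤ) := ⟨b.toNat, by omega⟩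
    rw [ch_ofNat, ch_ofNat]
    rcases le_or_gt (t : ℕ) (a + 1) with ht | ht
    · have := Nat.choose_mul_succ_eq a t
      have hcast : ((a + 1 - t : ℕ) : ℤ) = (a : ℤ) + 1 - t := by omega
      calc ((a : ℤ) + 1 - t) * ((a+1).choose t : ℤ)
          = (((a+1).choose t * (a + 1 - t) : ℕ) : ℤ) := by
            push_cast [hcast]; ring
        _ = ((a.choose t * (a+1) : ℕ) : ℤ) := by rw [← this]
        _ = ((a : ℤ) + 1) * (a.choose t : ℤ) := by push_cast; ring
    · rw [Nat.choose_eq_zero_of_lt ht, Nat.choose_eq_zero_of_lt (by omega)]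
      simp

lemma ch_L2 (a : ℕ) (b : ℤ) :
    b * ch (a + 1) b = ((a : ℤ) + 1) * ch a (b - 1) := by
  rcases lt_trichotomy b 0 with hb | hb | hb
  · rw [ch_neg hb, ch_neg (by omega : b - 1 < 0), mul_zero, mul_zero]
  · subst hb
    rw [zero_mul, ch_neg (show (0:ℤ) - 1 < 0 by norm_num), mul_zero]
  · obtain ⟨s, rfl⟩ : ∃ s : ℕ, b = (s : ℤ) + 1 := ⟨(b - 1).toNat, by omega⟩
    have h2 : ((s : ℤ) + 1 - 1) = (s : ℤ) := by ring
    rw [h2, ch_ofNat]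
    have h1 : ((s : ℤ) + 1) = ((s + 1 : ℕ) : ℤ) := by push_cast; ring
    rw [h1, ch_ofNat]
    have := Nat.add_one_mul_choose_eq a s
    calc ((s + 1 : ℕ) : ℤ) * ((a+1).choose (s+1) : ℤ)
        = (((a+1).choose (s+1) * (s+1) : ℕ) : ℤ) := by push_cast; ring
      _ = ((Nat.succ a * a.choose s : ℕ) : ℤ) := by rw [this]
      _ = ((a : ℤ) + 1) * (a.choose s : ℤ) := by push_cast; ring

/-- Coefficients of the polynomials `g_m` with `(n - 2t∂)^m (1-t)^n = (1-t)^{n-m} g_m(t)`. -/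
def cc (n : ℤ) : ℕ → ℤ → ℤ
  | 0 => fun j => if j = 0 then 1 else 0
  | (m+1) => fun j => (n - 2*j) * cc n m j + (n - 2*m + 2*j - 2) * cc n m (j-1)

lemma cc_neg (n : ℤ) (m : ℕ) : ∀ j : ℤ, j < 0 → cc n m j = 0 := by
  induction m with
  | zero => intro j hj; simp [cc, show j ≠ 0 by omega]
  | succ m ih =>
      intro j hj
      simp only [cc, ih j hj, ih (j-1) (by omega), mul_zero, add_zero]

lemma cc_gt (n : ℤ) (m : ℕ) : ∀ j : ℤ, (m : ℤ) < j → cc n m j = 0 := by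
  induction m with
  | zero => intro j hj; simp [cc, show j ≠ 0 by omega]
  | succ m ih =>
      intro j hj
      push_cast at hj
      simp only [cc, ih j (by omega), ih (j-1) (by omega), mul_zero, add_zero]

/-- Palindromic symmetry of the coefficients. -/
lemma cc_palindrome (n : ℤ) (m : ℕ) : ∀ j : ℤ, cc n m j = cc n m ((m : ℤ) - j) := by
  induction m with
  | zero =>
      intro j
      by_cases hj : j = 0
      · subst hj; norm_num
      · have h0 : (0:ℤ) - j ≠ 0 := by omega
        simp only [cc, Nat.cast_zero]
        rw [if_neg hj, if_neg h0]
  | succ m ih =>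
      intro j
      have e1 : cc n m ((m:ℤ) + 1 - j) = cc n m (j - 1) := by
        rw [ih ((m:ℤ) + 1 - j), show (m:ℤ) - ((m:ℤ) + 1 - j) = j - 1 by ring]
      have e2 : cc n m ((m:ℤ) + 1 - j - 1) = cc n m j := by
        rw [show (m:ℤ) + 1 - j - 1 = (m:ℤ) - j by ring, ← ih j]
      simp only [cc]
      push_cast
      rw [e1, e2, ih j, show (m:ℤ) - j = (m:ℤ) + 1 - j - 1 by ring]
      ring

/-- `(1-t)` expansion identity: `C(n,i) (n-2i)^m = ∑_j (-1)^j cc_{m,j} C(n-m, i-j)`. -/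
lemma star (n : ℕ) : ∀ m : ℕ, m ≤ n → ∀ i : ℕ,
    (n.choose i : ℤ) * ((n : ℤ) - 2 * i) ^ m =
      ∑ j ∈ range (m + 1), (-1 : ℤ) ^ j * cc n m j * ch (n - m) ((i : ℤ) - j) := by
  intro m
  induction m with
  | zero =>
      intro _ i
      simp [cc, ch_ofNat]
  | succ m ih =>
      intro hm i
      have hm' : m ≤ n := by omega
      have key : ∀ j : ℤ, ((n:ℤ) - 2*i) * ch (n - m) ((i:ℤ) - j) =
          ((n:ℤ) - 2*j) * ch (n - (m+1)) ((i:ℤ) - j)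
            - ((n:ℤ) - 2*m + 2*j) * ch (n - (m+1)) ((i:ℤ) - j - 1) := by
        intro j
        have ha : n - m = (n - (m+1)) + 1 := by omega
        set a : ℕ := n - (m+1) with ha'
        have hacast : ((a : ℤ) + 1) = (n : ℤ) - m := by omega
        rw [ha]
        set b : ℤ := (i : ℤ) - j with hb
        have e1 : ((a:ℤ) + 1 - b) * ch (a+1) b = ((a:ℤ)+1) * ch a b := ch_L1 a b
        have e2 : b * ch (a+1) b = ((a:ℤ)+1) * ch a (b-1) := ch_L2 a b
        have e3 : ch (a+1) b = ch a b + ch a (b-1) := ch_pascal a b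
        have hn2i : (n:ℤ) - 2*i = (((a:ℤ)+1) - b) - b + ((m:ℤ) - 2*j) := by
          rw [hacast, hb]; ring
        calc ((n:ℤ) - 2*i) * ch (a+1) b
            = (((a:ℤ)+1-b) * ch (a+1) b) - (b * ch (a+1) b)
              + ((m:ℤ) - 2*j) * ch (a+1) b := by rw [hn2i]; ring
          _ = ((a:ℤ)+1) * ch a b - ((a:ℤ)+1) * ch a (b-1)
              + ((m:ℤ) - 2*j) * (ch a b + ch a (b-1)) := by rw [e1, e2, e3]
          _ = ((n:ℤ) - 2*j) * ch a b - ((n:ℤ) - 2*m + 2*j) * ch a (b-1) := by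
              linear_combination (ch a b - ch a (b-1)) * hacast
      have expand : (n.choose i : ℤ) * ((n : ℤ) - 2 * i) ^ (m+1)
          = ∑ j ∈ range (m + 1), (-1:ℤ)^j * cc n m j
              * (((n:ℤ)-2*j) * ch (n-(m+1)) ((i:ℤ)-j))
            + ∑ j ∈ range (m + 1),
              (-1:ℤ)^(j+1) * cc n m j * (((n:ℤ)-2*(m:ℤ)+2*j) * ch (n-(m+1)) ((i:ℤ)-j-1)) := by
        calc (n.choose i : ℤ) * ((n : ℤ) - 2 * i) ^ (m+1)
            = ((n:ℤ) - 2*i) * ((n.choose i : ℤ) * ((n : ℤ) - 2 * i) ^ m) := by ring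
          _ = ((n:ℤ) - 2*i) * ∑ j ∈ range (m + 1),
                (-1:ℤ)^j * cc n m j * ch (n - m) ((i:ℤ) - j) := by rw [ih hm' i]
          _ = _ := by
              rw [mul_sum, ← sum_add_distrib]
              refine sum_congr rfl fun j _ => ?_
              rw [show ((n:ℤ) - 2*i) * ((-1:ℤ)^j * cc n m j * ch (n - m) ((i:ℤ) - j))
                  = (-1:ℤ)^j * cc n m j * (((n:ℤ) - 2*i) * ch (n - m) ((i:ℤ) - j)) by ring,
                key j]
              ring
      rw [expand]
      -- now expand the RHS of the goal via the `cc` recurrence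
      have hA : ∑ j ∈ range (m + 1 + 1),
          (-1:ℤ)^j * (((n:ℤ)-2*j) * cc n m j) * ch (n-(m+1)) ((i:ℤ)-j)
          = ∑ j ∈ range (m + 1), (-1:ℤ)^j * cc n m j
              * (((n:ℤ)-2*j) * ch (n-(m+1)) ((i:ℤ)-j)) := by
        rw [sum_range_succ, cc_gt n m ((m+1 : ℕ) : ℤ) (by push_cast; omega)]
        simp only [mul_zero, zero_mul, mul_zero, add_zero]
        exact sum_congr rfl fun j _ => by ring
      have hB : ∑ j ∈ range (m + 1 + 1),
          (-1:ℤ)^j * (((n:ℤ) - 2*(m:ℤ) + 2*j - 2) * cc n m (j-1)) * ch (n-(m+1)) ((i:ℤ)-j)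
          = ∑ j ∈ range (m + 1),
              (-1:ℤ)^(j+1) * cc n m j * (((n:ℤ)-2*(m:ℤ)+2*j) * ch (n-(m+1)) ((i:ℤ)-j-1)) := by
        rw [sum_range_succ']
        rw [show ((0:ℕ):ℤ) - 1 = -1 by norm_num]
        rw [cc_neg n m (-1) (by norm_num)]
        simp only [mul_zero, zero_mul, add_zero]
        refine sum_congr rfl fun j _ => ?_
        push_cast
        rw [show ((j:ℤ) + 1 - 1) = (j:ℤ) by ring]
        rw [show ((n:ℤ) - 2*(m:ℤ) + 2*((j:ℤ)+1) - 2) = (n:ℤ) - 2*(m:ℤ) + 2*(j:ℤ) by ring]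
        rw [show ((i:ℤ) - ((j:ℤ)+1)) = (i:ℤ) - (j:ℤ) - 1 by ring]
        ring
      rw [← hA, ← hB, ← sum_add_distrib]
      refine (sum_congr rfl fun j _ => ?_).symm
      show (-1:ℤ)^j * cc n (m+1) j * ch (n-(m+1)) ((i:ℤ)-j) = _
      rw [show cc n (m+1) (j:ℤ)
          = ((n:ℤ) - 2*(j:ℤ)) * cc n m j + ((n:ℤ) - 2*(m:ℤ) + 2*(j:ℤ) - 2) * cc n m ((j:ℤ)-1)
          from rfl]
      ring

/-- Alternating Vandermonde-type identity: `∑_s (-1)^s C(M+K-s, K-s) C(M,s) = 1`. -/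
lemma a_eq_one (M K : ℕ) :
    ∑ s ∈ range (K + 1), (-1:ℤ)^s * ch (M + K - s) ((K:ℤ) - s) * (M.choose s : ℤ) = 1 := by
  induction M with
  | zero =>
      rw [Finset.sum_eq_single 0]
      · simp only [pow_zero, Nat.choose_zero_right, Nat.cast_one, mul_one, one_mul,
          Nat.cast_zero, sub_zero, Nat.zero_add, Nat.sub_zero]
        rw [show ((K:ℤ)) = ((K:ℕ):ℤ) from rfl, ch_ofNat, Nat.choose_self, Nat.cast_one]
      · intro s _ hs
        obtain ⟨t, rfl⟩ : ∃ t, s = t + 1 := ⟨s - 1, by omega⟩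
        simp [Nat.choose_eq_zero_of_lt (by omega : 0 < t + 1)]
      · intro habs
        exact absurd (mem_range.mpr (by omega)) habs
  | succ M ih =>
      set W : ℤ := ∑ t ∈ range K, (-1:ℤ)^t * ch (M + K - t) ((K:ℤ) - 1 - t) * (M.choose t : ℤ)
        with hW
      have h1 : ∑ s ∈ range (K + 1), (-1:ℤ)^s * ch (M + 1 + K - s) ((K:ℤ) - s)
            * (M.choose s : ℤ)
          - ∑ s ∈ range (K + 1), (-1:ℤ)^s * ch (M + 1 + K - s) ((K:ℤ) - s)
            * ((M+1).choose s : ℤ) = W := by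
        rw [← sum_sub_distrib, sum_range_succ']
        have e0 : ((-1:ℤ)^(0:ℕ) * ch (M + 1 + K - 0) ((K:ℤ) - (0:ℕ)) * (M.choose 0 : ℤ)
            - (-1:ℤ)^(0:ℕ) * ch (M + 1 + K - 0) ((K:ℤ) - (0:ℕ)) * ((M+1).choose 0 : ℤ)) = 0 := by
          simp
        rw [e0, add_zero, hW]
        refine sum_congr rfl fun t ht => ?_
        have ht' : t < K := mem_range.mp ht
        have hnat : M + 1 + K - (t + 1) = M + K - t := by omega
        have hcast : ((K:ℤ) - ((t:ℤ) + 1)) = (K:ℤ) - 1 - t := by ring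
        have hch : (((M+1).choose (t+1) : ℕ) : ℤ) = (M.choose t : ℤ) + (M.choose (t+1) : ℤ) := by
          rw [Nat.choose_succ_succ]
          push_cast
          ring
        push_cast [hnat]
        rw [hcast, hch]
        ring
      have h2 : ∑ s ∈ range (K + 1), (-1:ℤ)^s * ch (M + 1 + K - s) ((K:ℤ) - s)
            * (M.choose s : ℤ)
          = ∑ s ∈ range (K + 1), (-1:ℤ)^s * ch (M + K - s) ((K:ℤ) - s) * (M.choose s : ℤ)
            + W := by
        have pas : ∀ s ∈ range (K+1), (-1:ℤ)^s * ch (M + 1 + K - s) ((K:ℤ) - s)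
            * (M.choose s : ℤ)
            = (-1:ℤ)^s * ch (M + K - s) ((K:ℤ) - s) * (M.choose s : ℤ)
              + (-1:ℤ)^s * ch (M + K - s) ((K:ℤ) - s - 1) * (M.choose s : ℤ) := by
          intro s hs
          have hnat : M + 1 + K - s = (M + K - s) + 1 := by
            have := mem_range.mp hs; omega
          rw [hnat, ch_pascal]
          ring
        rw [sum_congr rfl pas, sum_add_distrib]
        congr 1
        rw [sum_range_succ]
        have elast : (-1:ℤ)^K * ch (M + K - K) ((K:ℤ) - K - 1) * (M.choose K : ℤ) = 0 := by
          rw [ch_neg (by omega : (K:ℤ) - K - 1 < 0)]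
          ring
        rw [elast, add_zero, hW]
        refine sum_congr rfl fun t ht => ?_
        rw [show (K:ℤ) - t - 1 = (K:ℤ) - 1 - t by ring]
      linear_combination h2 - h1 + ih

lemma inner_le (n k j : ℕ) (h : 2*k+1 ≤ n) (hj : j ≤ k) :
    ∑ i ∈ range (k+1), (-1:ℤ)^i * ((n - k - 1 - i).choose (k - i) : ℤ)
        * ch (n - (2*k+1)) ((i:ℤ) - j)
      = (-1:ℤ)^j := by
  have hsplit : range (k+1) = Finset.Ico 0 j ∪ Finset.Ico j (k+1) := by
    rw [Finset.Ico_union_Ico_eq_Ico (by omega) (by omega), range_eq_Ico]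
  rw [hsplit, Finset.sum_union (Finset.Ico_disjoint_Ico_consecutive 0 j (k+1))]
  have hz : ∑ i ∈ Finset.Ico 0 j, (-1:ℤ)^i * ((n - k - 1 - i).choose (k - i) : ℤ)
      * ch (n - (2*k+1)) ((i:ℤ) - j) = 0 := by
    refine Finset.sum_eq_zero fun i hi => ?_
    have : i < j := (Finset.mem_Ico.mp hi).2
    rw [ch_neg (by omega : (i:ℤ) - j < 0)]
    ring
  rw [hz, zero_add, Finset.sum_Ico_eq_sum_range]
  have hrange : k + 1 - j = (k - j) + 1 := by omega
  rw [hrange]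
  have hterm : ∀ s ∈ range ((k - j) + 1),
      (-1:ℤ)^(j+s) * ((n - k - 1 - (j+s)).choose (k - (j+s)) : ℤ)
          * ch (n - (2*k+1)) (((j+s : ℕ):ℤ) - j)
      = (-1:ℤ)^j * ((-1:ℤ)^s * ch ((n - (2*k+1)) + (k - j) - s) (((k-j : ℕ):ℤ) - s)
          * ((n - (2*k+1)).choose s : ℤ)) := by
    intro s hs
    have hs' : s ≤ k - j := by have := mem_range.mp hs; omega
    have e1 : (n - (2*k+1)) + (k - j) - s = n - k - 1 - (j+s) := by omega
    have e2 : (((k-j : ℕ):ℤ) - s) = (((k - (j+s) : ℕ)):ℤ) := by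
      push_cast; omega
    have e3 : (((j+s : ℕ):ℤ) - j) = ((s:ℕ):ℤ) := by push_cast; ring
    rw [e1, e2, e3, ch_ofNat, ch_ofNat, pow_add]
    ring
  rw [sum_congr rfl hterm, ← mul_sum, a_eq_one (n - (2*k+1)) (k - j), mul_one]

lemma inner_gt (n k j : ℕ) (hj : k < j) :
    ∑ i ∈ range (k+1), (-1:ℤ)^i * ((n - k - 1 - i).choose (k - i) : ℤ)
        * ch (n - (2*k+1)) ((i:ℤ) - j)
      = 0 := by
  refine Finset.sum_eq_zero fun i hi => ?_
  have : i < k + 1 := mem_range.mp hi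
  rw [ch_neg (by omega : (i:ℤ) - j < 0)]
  ring

lemma cc_total (n : ℤ) (m : ℕ) :
    ∑ j ∈ range (m+1), cc n m (j:ℤ) = ∏ t ∈ range m, (2*n - 2*t) := by
  induction m with
  | zero =>
      rw [sum_range_one, prod_range_zero]
      show (if ((0:ℕ):ℤ) = 0 then (1:ℤ) else 0) = 1
      norm_num
  | succ m ih =>
      have hexp : ∀ j ∈ range (m+2), cc n (m+1) (j:ℤ)
          = (n - 2*(j:ℤ)) * cc n m (j:ℤ) + (n - 2*(m:ℤ) + 2*(j:ℤ) - 2) * cc n m ((j:ℤ)-1) := by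
        intro j _
        rfl
      rw [sum_congr rfl hexp, sum_add_distrib]
      have hA : ∑ j ∈ range (m+2), (n - 2*(j:ℤ)) * cc n m (j:ℤ)
          = ∑ j ∈ range (m+1), (n - 2*(j:ℤ)) * cc n m (j:ℤ) := by
        rw [sum_range_succ, cc_gt n m (((m+1:ℕ)):ℤ) (by push_cast; omega), mul_zero, add_zero]
      have hB : ∑ j ∈ range (m+2), (n - 2*(m:ℤ) + 2*(j:ℤ) - 2) * cc n m ((j:ℤ)-1)
          = ∑ j ∈ range (m+1), (n - 2*(m:ℤ) + 2*(j:ℤ)) * cc n m (j:ℤ) := by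
        rw [sum_range_succ']
        rw [show (((0:ℕ)):ℤ) - 1 = -1 by norm_num, cc_neg n m (-1) (by norm_num), mul_zero,
          add_zero]
        refine sum_congr rfl fun t _ => ?_
        push_cast
        rw [show ((t:ℤ) + 1 - 1) = (t:ℤ) by ring]
        ring_nf
      rw [hA, hB, ← sum_add_distrib]
      have : ∀ j ∈ range (m+1), (n - 2*(j:ℤ)) * cc n m (j:ℤ)
          + (n - 2*(m:ℤ) + 2*(j:ℤ)) * cc n m (j:ℤ) = (2*n - 2*(m:ℤ)) * cc n m (j:ℤ) := by
        intro j _; ring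
      rw [sum_congr rfl this, ← mul_sum, ih, prod_range_succ]
      ring

lemma cc_half (n : ℤ) (k : ℕ) :
    2 * ∑ j ∈ range (k+1), cc n (2*k+1) (j:ℤ)
      = ∑ j ∈ range (2*k+1+1), cc n (2*k+1) (j:ℤ) := by
  have hsplit : range (2*k+1+1) = range (k+1) ∪ Finset.Ico (k+1) (2*k+1+1) := by
    rw [range_eq_Ico, range_eq_Ico]
    exact (Finset.Ico_union_Ico_eq_Ico (by omega : 0 ≤ k+1) (by omega)).symm
  rw [hsplit, Finset.sum_union]
  · have hrefl : ∑ j ∈ Finset.Ico (k+1) (2*k+1+1), cc n (2*k+1) (j:ℤ)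
        = ∑ j ∈ range (k+1), cc n (2*k+1) (j:ℤ) := by
      rw [Finset.sum_Ico_eq_sum_range]
      have hlen : 2*k+1+1 - (k+1) = k+1 := by omega
      rw [hlen]
      have hterm : ∀ t ∈ range (k+1), cc n (2*k+1) (((k+1+t : ℕ)):ℤ)
          = cc n (2*k+1) (((k - t : ℕ)):ℤ) := by
        intro t ht
        have ht' : t ≤ k := by have := mem_range.mp ht; omega
        rw [cc_palindrome n (2*k+1) (((k+1+t : ℕ)):ℤ)]
        congr 1
        push_cast [ht']
        omega
      rw [sum_congr rfl hterm]
      have := sum_range_reflect (fun j => cc n (2*k+1) ((j:ℕ):ℤ)) (k+1)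
      simpa using this
    rw [hrefl]
    ring
  · exact (Finset.range_eq_Ico (k+1)) ▸ Finset.Ico_disjoint_Ico_consecutive 0 (k+1) (2*k+1+1)

lemma desc_cast (n m : ℕ) (h : m ≤ n) :
    (n.descFactorial m : ℤ) = ∏ t ∈ range m, ((n:ℤ) - t) := by
  induction m with
  | zero => simp
  | succ m ih =>
      rw [Nat.descFactorial_succ, prod_range_succ, ← ih (by omega)]
      have : ((n - m : ℕ) : ℤ) = (n:ℤ) - m := by omega
      push_cast [this]
      ring

/-- The combinatorial identity obtained by evaluating the power sum decomposition of
`σ_{2k+1,n}` at `x_1 = ⋯ = x_n = 1`: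
`∑_{i=0}^{k} (-1)^i C(n-k-1-i, k-i) C(n,i) (n-2i)^{2k+1} = 2^{2k} · n!/(n-2k-1)!`. -/
theorem esymm_sum_identity (n k : ℕ) (h : 2 * k + 1 ≤ n) :
    ∑ i ∈ range (k + 1),
        (-1 : ℤ) ^ i * ((n - k - 1 - i).choose (k - i) : ℤ) * (n.choose i : ℤ) *
          ((n : ℤ) - 2 * i) ^ (2 * k + 1) =
      2 ^ (2 * k) * (n.descFactorial (2 * k + 1) : ℤ) := by
  have hstar := star n (2*k+1) h
  calc ∑ i ∈ range (k + 1),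
        (-1 : ℤ) ^ i * ((n - k - 1 - i).choose (k - i) : ℤ) * (n.choose i : ℤ) *
          ((n : ℤ) - 2 * i) ^ (2 * k + 1)
      = ∑ i ∈ range (k + 1), ∑ j ∈ range (2*k+1+1),
          ((-1:ℤ)^j * cc n (2*k+1) j)
            * ((-1 : ℤ) ^ i * ((n - k - 1 - i).choose (k - i) : ℤ)
                * ch (n - (2*k+1)) ((i:ℤ) - j)) := by
        refine sum_congr rfl fun i _ => ?_
        rw [show (-1 : ℤ) ^ i * ((n - k - 1 - i).choose (k - i) : ℤ) * (n.choose i : ℤ) *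
          ((n : ℤ) - 2 * i) ^ (2 * k + 1)
          = ((-1 : ℤ) ^ i * ((n - k - 1 - i).choose (k - i) : ℤ))
            * ((n.choose i : ℤ) * ((n : ℤ) - 2 * i) ^ (2 * k + 1)) by ring]
        rw [hstar i, mul_sum]
        refine sum_congr rfl fun j _ => ?_
        ring
    _ = ∑ j ∈ range (2*k+1+1), ((-1:ℤ)^j * cc n (2*k+1) j)
          * ∑ i ∈ range (k + 1), (-1 : ℤ) ^ i * ((n - k - 1 - i).choose (k - i) : ℤ)
              * ch (n - (2*k+1)) ((i:ℤ) - j) := by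
        rw [sum_comm]
        exact sum_congr rfl fun j _ => (mul_sum _ _ _).symm
    _ = ∑ j ∈ range (2*k+1+1), (if j ≤ k then cc n (2*k+1) (j:ℤ) else 0) := by
        refine sum_congr rfl fun j _ => ?_
        by_cases hj : j ≤ k
        · rw [if_pos hj, inner_le n k j h hj]
          rw [show ((-1:ℤ)^j * cc n (2*k+1) (j:ℤ)) * (-1:ℤ)^j
              = ((-1:ℤ)^j * (-1:ℤ)^j) * cc n (2*k+1) (j:ℤ) by ring, ← pow_add,
            show j + j = 2*j by ring, pow_mul, neg_one_sq, one_pow, one_mul]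
        · rw [if_neg hj, inner_gt n k j (by omega), mul_zero]
    _ = ∑ j ∈ range (k+1), cc n (2*k+1) (j:ℤ) := by
        rw [← Finset.sum_subset (Finset.range_subset_range.mpr (by omega : k+1 ≤ 2*k+1+1))]
        · exact sum_congr rfl fun j hj => if_pos (by have := mem_range.mp hj; omega)
        · intro j _ hj
          rw [if_neg (by have := mem_range.mp (show j ∈ range (2*k+1+1) by assumption); 
                         simp only [mem_range] at hj; omega)]
    _ = 2 ^ (2 * k) * (n.descFactorial (2 * k + 1) : ℤ) := by
        have h2 := cc_half (n:ℤ) k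
        rw [cc_total] at h2
        have hprod : ∏ t ∈ range (2*k+1), (2*(n:ℤ) - 2*t)
            = 2^(2*k+1) * ∏ t ∈ range (2*k+1), ((n:ℤ) - t) := by
          calc ∏ t ∈ range (2*k+1), (2*(n:ℤ) - 2*(t:ℤ))
              = ∏ t ∈ range (2*k+1), (2 * ((n:ℤ) - (t:ℤ))) :=
                prod_congr rfl fun t _ => by ring
            _ = 2^(2*k+1) * ∏ t ∈ range (2*k+1), ((n:ℤ) - t) := by
                rw [prod_mul_distrib, prod_const, card_range]
        rw [hprod] at h2
        rw [desc_cast n (2*k+1) h]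
        have : (2:ℤ) * (2 ^ (2*k) * ∏ t ∈ range (2*k+1), ((n:ℤ) - t))
            = 2 * ∑ j ∈ range (k+1), cc (n:ℤ) (2*k+1) (j:ℤ) := by
          rw [h2]; ring
        have := mul_left_cancel₀ (by norm_num : (2:ℤ) ≠ 0) this
        linarith [this]
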